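/- Let K : ℝ → ℝ be a continuous (ν+1)-th order kernel with compact support [−1, 1], i.e., ∫K(u)du = 1, ∫u^r K(u)du = 0 for 1 ≤ r ≤ ν, and ∫|u^{ν+1} K(u)|du < ∞. Let f : ℝ → ℝ have continuous (ν+1)-th derivative. Fix x ∈ ℝ. Then as h → 0⁺, (1/h) ∫ K((u − x)/h) f(u) du = f(x) + (κ_{ν+1}/(ν+1)!) f^{(ν+1)}(x) h^{ν+1} + o(h^{ν+1}), where κ_{ν+1} = ∫ u^{ν+1} K(u) du. -/

import Mathlib

open MeasureTheory Filter Asymptotics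

private lemma iterWithin_eq (n m : ℕ) (hmn : m ≤ n) (f : ℝ → ℝ)
    (hf : ContDiff ℝ ((n : ℕ) : WithTop ℕ∞) f) (s : Set ℝ) (hs : UniqueDiffOn ℝ s)
    (y : ℝ) (hy : y ∈ s) :
    iteratedDerivWithin m f s y = iteratedDeriv m f y := by
  rw [iteratedDerivWithin_eq_iteratedFDerivWithin, iteratedDeriv_eq_iteratedFDeriv]
  congr 1
  have H : HasFTaylorSeriesUpTo ((n : ℕ) : ℕ∞) f (ftaylorSeries ℝ f) :=
    contDiff_iff_ftaylorSeries.mp (by exact_mod_cast hf)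
  exact ((H.hasFTaylorSeriesUpToOn s).eq_iteratedFDerivWithin_of_uniqueDiffOn
    (by exact_mod_cast hmn) hs hy).symm

private lemma iter_reflect (r : ℕ) (f : ℝ → ℝ) (c a : ℝ) :
    iteratedDeriv r (fun t => f (-t + c)) a = (-1) ^ r * iteratedDeriv r f (-a + c) := by
  have h := iteratedDeriv_comp_neg r (fun z => f (z + c)) a
  simpa [iteratedDeriv_comp_add_const, smul_eq_mul] using h

private lemma taylor_bound_pos (ν : ℕ) (f : ℝ → ℝ)
    (hf : ContDiff ℝ ((ν + 1 : ℕ) : WithTop ℕ∞) f) (x : ℝ) {ε' δ : ℝ}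
    (hcont : ∀ y, |y - x| ≤ δ →
      |iteratedDeriv (ν + 1) f y - iteratedDeriv (ν + 1) f x| ≤ ε') :
    ∀ s, 0 < s → s ≤ δ →
      |f (x + s) - ∑ r ∈ Finset.range (ν + 2),
          iteratedDeriv r f x * s ^ r / (r.factorial : ℝ)|
        ≤ ε' / ((ν + 1).factorial : ℝ) * s ^ (ν + 1) := by
  intro s hs hsδ
  have hx : x < x + s := by linarith
  set I := Set.Icc x (x + s) with hI
  have hud : UniqueDiffOn ℝ I := uniqueDiffOn_Icc hx
  have hiter : ∀ m, m ≤ ν + 1 → ∀ y ∈ I, iteratedDerivWithin m f I y = iteratedDeriv m f y :=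
    fun m hm y hy => iterWithin_eq (ν + 1) m hm f hf I hud y hy
  have hfI : ContDiffOn ℝ (ν : ℕ) f I :=
    (hf.of_le (by exact_mod_cast Nat.le_succ ν)).contDiffOn
  have hdiffG : Differentiable ℝ (iteratedDeriv ν f) :=
    hf.differentiable_iteratedDeriv ν (by exact_mod_cast Nat.lt_succ_self ν)
  have hdiff : DifferentiableOn ℝ (iteratedDerivWithin ν f I) (Set.Ioo x (x + s)) := by
    refine (hdiffG.differentiableOn).congr ?_
    intro y hy
    exact hiter ν (Nat.le_succ ν) y (Set.Ioo_subset_Icc_self hy)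
  obtain ⟨ξ, hξ, hform⟩ := taylor_mean_remainder_lagrange hx.ne
    (by rwa [Set.uIcc_of_le hx.le]) (by rwa [Set.uIcc_of_le hx.le, Set.uIoo_of_le hx.le])
  rw [Set.uIoo_of_le hx.le] at hξ
  rw [Set.uIcc_of_le hx.le] at hform
  rw [taylor_within_apply] at hform
  have hxI : x ∈ I := Set.left_mem_Icc.mpr (le_of_lt hx)
  have hsum : (∑ k ∈ Finset.range (ν + 1),
        (((k.factorial : ℝ))⁻¹ * (x + s - x) ^ k) • iteratedDerivWithin k f I x)
      = ∑ k ∈ Finset.range (ν + 1), iteratedDeriv k f x * s ^ k / (k.factorial : ℝ) := by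
    refine Finset.sum_congr rfl fun k hk => ?_
    have hk' := Finset.mem_range.mp hk
    rw [hiter k (by omega) x hxI]
    simp only [add_sub_cancel_left, smul_eq_mul]
    ring
  rw [hsum] at hform
  have hξI : ξ ∈ I := Set.Ioo_subset_Icc_self hξ
  rw [hiter (ν + 1) le_rfl ξ hξI, add_sub_cancel_left] at hform
  have hform2 : f (x + s) - ∑ r ∈ Finset.range (ν + 2),
      iteratedDeriv r f x * s ^ r / (r.factorial : ℝ)
      = (iteratedDeriv (ν + 1) f ξ - iteratedDeriv (ν + 1) f x) * s ^ (ν + 1)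
          / ((ν + 1).factorial : ℝ) := by
    rw [Finset.sum_range_succ, ← sub_sub, hform]
    ring
  rw [hform2]
  have hξd : |ξ - x| ≤ δ := by
    rw [abs_of_nonneg (by linarith [hξ.1] : (0:ℝ) ≤ ξ - x)]
    linarith [hξ.2]
  have hb := hcont ξ hξd
  rw [abs_div, abs_mul, abs_pow, abs_of_pos hs, Nat.abs_cast, div_mul_eq_mul_div]
  gcongr

private lemma taylor_bound (ν : ℕ) (f : ℝ → ℝ)
    (hf : ContDiff ℝ ((ν + 1 : ℕ) : WithTop ℕ∞) f) (x : ℝ) {ε' δ : ℝ}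
    (hcont : ∀ y, |y - x| ≤ δ →
      |iteratedDeriv (ν + 1) f y - iteratedDeriv (ν + 1) f x| ≤ ε') :
    ∀ s, |s| ≤ δ →
      |f (x + s) - ∑ r ∈ Finset.range (ν + 2),
          iteratedDeriv r f x * s ^ r / (r.factorial : ℝ)|
        ≤ ε' / ((ν + 1).factorial : ℝ) * |s| ^ (ν + 1) := by
  intro s hsδ
  rcases lt_trichotomy s 0 with hneg | rfl | hpos
  · -- reflect f around x
    set g : ℝ → ℝ := fun t => f (-t + 2 * x) with hg
    have hgC : ContDiff ℝ ((ν + 1 : ℕ) : WithTop ℕ∞) g :=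
      hf.comp ((contDiff_id.neg).add contDiff_const)
    have hgiter : ∀ r a, iteratedDeriv r g a = (-1) ^ r * iteratedDeriv r f (-a + 2 * x) :=
      fun r a => iter_reflect r f (2 * x) a
    have hxx : -x + 2 * x = x := by ring
    have hgx : ∀ r, iteratedDeriv r g x = (-1) ^ r * iteratedDeriv r f x := by
      intro r; rw [hgiter, hxx]
    have hgcont : ∀ y, |y - x| ≤ δ →
        |iteratedDeriv (ν + 1) g y - iteratedDeriv (ν + 1) g x| ≤ ε' := by
      intro y hy
      rw [hgiter, hgx, ← mul_sub, abs_mul, abs_pow, abs_neg, abs_one, one_pow, one_mul]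
      apply hcont
      have h1 : -y + 2 * x - x = -(y - x) := by ring
      rw [h1, abs_neg]; exact hy
    have hb := taylor_bound_pos ν g hgC x hgcont (-s) (by linarith)
      (by rw [abs_of_neg hneg] at hsδ; linarith)
    have e1 : g (x + -s) = f (x + s) := by
      simp only [hg]; ring_nf
    have e3 : (∑ r ∈ Finset.range (ν + 2), iteratedDeriv r g x * (-s) ^ r / (r.factorial : ℝ))
        = ∑ r ∈ Finset.range (ν + 2), iteratedDeriv r f x * s ^ r / (r.factorial : ℝ) := by
      refine Finset.sum_congr rfl fun r _ => ?_
      rw [hgx, mul_comm ((-1 : ℝ) ^ r), mul_assoc, ← mul_pow]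
      ring_nf
    rw [e1, e3] at hb
    rw [abs_of_neg hneg]
    exact hb
  · have h0 : (∑ r ∈ Finset.range (ν + 2),
        iteratedDeriv r f x * (0:ℝ) ^ r / (r.factorial : ℝ)) = f x := by
      rw [Finset.sum_eq_single 0]
      · simp
      · intro b _ hb; simp [zero_pow hb]
      · intro h; simp at h
    simp [h0]
  · have hb := taylor_bound_pos ν f hf x hcont s hpos (by rwa [abs_of_pos hpos] at hsδ)
    rwa [abs_of_pos hpos]

theorem higher_order_kernel_expansion (ν : ℕ) (K : ℝ → ℝ) (hKc : Continuous K)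
    (hKsupp : ∀ u, 1 < |u| → K u = 0)
    (hK1 : ∫ u, K u = 1)
    (hKmom : ∀ r : ℕ, 1 ≤ r → r ≤ ν → ∫ u, u ^ r * K u = 0)
    (hKint : Integrable (fun u => |u ^ (ν + 1) * K u|))
    (f : ℝ → ℝ) (hf : ContDiff ℝ (ν + 1) f) (x : ℝ) :
    (fun h : ℝ => (1 / h) * (∫ u, K ((u - x) / h) * f u)
        - (f x + (∫ u, u ^ (ν + 1) * K u) / (Nat.factorial (ν + 1))
            * iteratedDeriv (ν + 1) f x * h ^ (ν + 1)))
      =o[nhdsWithin 0 (Set.Ioi 0)] (fun h : ℝ => h ^ (ν + 1)) := by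
  have hf' : ContDiff ℝ ((ν + 1 : ℕ) : WithTop ℕ∞) f := by exact_mod_cast hf
  have hfc : Continuous f := hf'.continuous
  set D : ℝ := iteratedDeriv (ν + 1) f x with hD
  set κ : ℝ := ∫ u, u ^ (ν + 1) * K u with hκ
  set C : ℝ := ∫ u, |u ^ (ν + 1) * K u| with hC
  have hC0 : 0 ≤ C := integral_nonneg fun u => abs_nonneg _
  have hKzero : ∀ u : ℝ, u ∉ Set.Icc (-1 : ℝ) 1 → K u = 0 := by
    intro u hu
    apply hKsupp
    by_contra hcon
    push_neg at hcon
    exact hu (abs_le.mp hcon)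
  have hint : ∀ g : ℝ → ℝ, Continuous g → Integrable (fun t => K t * g t) := by
    intro g hg
    apply (hKc.mul hg).integrable_of_hasCompactSupport
    apply HasCompactSupport.intro (isCompact_Icc (a := (-1 : ℝ)) (b := 1))
    intro u hu
    simp [hKzero u hu]
  have Imono : ∀ r : ℕ, Integrable (fun t : ℝ => t ^ r * K t) := by
    intro r
    have := hint (fun t => t ^ r) (by fun_prop)
    refine this.congr (Filter.Eventually.of_forall fun t => ?_)
    ring
  set R : ℝ → ℝ := fun s => f (x + s) - ∑ r ∈ Finset.range (ν + 2),
      iteratedDeriv r f x * s ^ r / (r.factorial : ℝ) with hRdef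
  have hRc : Continuous R := by
    apply Continuous.sub (hfc.comp (by fun_prop))
    exact continuous_finset_sum _ fun r _ => by fun_prop
  -- key identity
  have key : ∀ h : ℝ, 0 < h →
      (1 / h) * (∫ u, K ((u - x) / h) * f u)
        - (f x + κ / (Nat.factorial (ν + 1)) * D * h ^ (ν + 1))
      = ∫ t, K t * R (h * t) := by
    intro h hh
    have hne : h ≠ 0 := ne_of_gt hh
    have h1 : (∫ u, K ((u - x) / h) * f u) = ∫ u, K (u / h) * f (u + x) := by
      rw [← integral_add_right_eq_self (fun u => K ((u - x) / h) * f u) x]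
      congr 1; funext u; rw [add_sub_cancel_right]
    have h2 : (∫ t, K t * f (x + h * t)) = |h⁻¹| • ∫ u, K (u / h) * f (u + x) := by
      rw [← MeasureTheory.Measure.integral_comp_mul_left (fun u => K (u / h) * f (u + x)) h]
      congr 1; funext t
      rw [mul_div_cancel_left₀ _ hne, add_comm]
    have h3 : (1 / h) * (∫ u, K ((u - x) / h) * f u) = ∫ t, K t * f (x + h * t) := by
      rw [h1, h2, abs_of_pos (inv_pos.mpr hh), smul_eq_mul, one_div]
    rw [h3]
    have expand : ∀ t : ℝ, K t * f (x + h * t)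
        = K t * R (h * t) + ∑ r ∈ Finset.range (ν + 2),
            (iteratedDeriv r f x / (r.factorial : ℝ)) * h ^ r * (t ^ r * K t) := by
      intro t
      have hterm : (∑ r ∈ Finset.range (ν + 2),
            (iteratedDeriv r f x / (r.factorial : ℝ)) * h ^ r * (t ^ r * K t))
          = K t * ∑ r ∈ Finset.range (ν + 2),
              iteratedDeriv r f x * (h * t) ^ r / (r.factorial : ℝ) := by
        rw [Finset.mul_sum]
        refine Finset.sum_congr rfl fun r _ => ?_
        rw [mul_pow]; ring
      rw [hterm]
      simp only [hRdef]
      ring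
    have h4 : (∫ t, K t * f (x + h * t))
        = (∫ t, K t * R (h * t)) + ∑ r ∈ Finset.range (ν + 2),
            (iteratedDeriv r f x / (r.factorial : ℝ)) * h ^ r * ∫ t, t ^ r * K t := by
      rw [integral_congr_ae (Filter.Eventually.of_forall expand)]
      have IR : Integrable (fun t : ℝ => K t * R (h * t)) :=
        hint (fun t => R (h * t)) (by exact hRc.comp (continuous_const.mul continuous_id))
      rw [integral_add IR
        (integrable_finset_sum _ fun r _ => (Imono r).const_mul _)]
      congr 1
      rw [integral_finset_sum _ fun r _ => (Imono r).const_mul _]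
      exact Finset.sum_congr rfl fun r _ => integral_const_mul _ _
    rw [h4]
    have hs0 : (∑ r ∈ Finset.range (ν + 1),
        (iteratedDeriv r f x / (r.factorial : ℝ)) * h ^ r * ∫ t, t ^ r * K t) = f x := by
      rw [Finset.sum_eq_single 0]
      · simp only [iteratedDeriv_zero, Nat.factorial_zero, Nat.cast_one, div_one, pow_zero,
          mul_one, one_mul]
        rw [hK1, mul_one]
      · intro b hb hb0
        rw [hKmom b (Nat.one_le_iff_ne_zero.mpr hb0) (by
          simp only [Finset.mem_range] at hb; omega), mul_zero]
      · intro h'; simp at h'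
    rw [Finset.sum_range_succ, hs0]
    simp only [← hD, ← hκ]
    ring
  -- the little-o estimate
  rw [isLittleO_iff]
  intro c hc
  set ε : ℝ := c / (C + 1) with hε
  have hεpos : 0 < ε := by positivity
  have hεC : ε * C ≤ c := by
    rw [hε, div_mul_eq_mul_div, div_le_iff₀ (by positivity)]
    nlinarith
  -- continuity of the top derivative
  have hcont : Continuous (iteratedDeriv (ν + 1) f) :=
    hf'.continuous_iteratedDeriv (ν + 1) (by exact_mod_cast le_rfl)
  have hcx : ContinuousAt (iteratedDeriv (ν + 1) f) x := hcont.continuousAt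
  obtain ⟨δ, hδpos, hδ⟩ := Metric.continuousAt_iff.mp hcx (ε * ((ν + 1).factorial : ℝ))
    (by positivity)
  set δ' : ℝ := δ / 2 with hδ'
  have hδ'pos : 0 < δ' := by positivity
  have hbnd : ∀ y, |y - x| ≤ δ' →
      |iteratedDeriv (ν + 1) f y - iteratedDeriv (ν + 1) f x|
        ≤ ε * ((ν + 1).factorial : ℝ) := by
    intro y hy
    have : dist y x < δ := by
      rw [Real.dist_eq]; rw [hδ'] at hy; linarith
    have := hδ this
    rw [Real.dist_eq] at this
    exact le_of_lt this
  have hRbound : ∀ s : ℝ, |s| ≤ δ' → |R s| ≤ ε * |s| ^ (ν + 1) := by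
    intro s hs
    have := taylor_bound ν f hf' x hbnd s hs
    simp only [hRdef]
    have heq : ε * ((ν + 1).factorial : ℝ) / ((ν + 1).factorial : ℝ) = ε := by
      field_simp
    rwa [heq] at this
  filter_upwards [Ioc_mem_nhdsGT_of_mem (Set.mem_Ico.mpr ⟨le_refl (0:ℝ), hδ'pos⟩)] with h hh
  obtain ⟨hh0, hhδ⟩ := hh
  rw [key h hh0]
  have hptwise : ∀ t : ℝ, |K t * R (h * t)| ≤ ε * h ^ (ν + 1) * |t ^ (ν + 1) * K t| := by
    intro t
    rcases le_or_gt |t| 1 with ht | ht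
    · have hht : |h * t| ≤ δ' := by
        rw [abs_mul, abs_of_pos hh0]
        calc h * |t| ≤ h * 1 := by
              exact mul_le_mul_of_nonneg_left ht (le_of_lt hh0)
          _ = h := mul_one h
          _ ≤ δ' := hhδ
      have hb := hRbound (h * t) hht
      rw [abs_mul]
      calc |K t| * |R (h * t)| ≤ |K t| * (ε * |h * t| ^ (ν + 1)) :=
            mul_le_mul_of_nonneg_left hb (abs_nonneg _)
        _ = ε * h ^ (ν + 1) * (|t| ^ (ν + 1) * |K t|) := by
            rw [abs_mul, mul_pow, abs_of_pos hh0]; ring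
        _ = ε * h ^ (ν + 1) * |t ^ (ν + 1) * K t| := by
            rw [abs_mul, abs_pow]
    · rw [hKsupp t ht]
      simp only [zero_mul, mul_zero, abs_zero]
      positivity
  have hI1 : Integrable (fun t => |K t * R (h * t)|) :=
    (hint (fun t => R (h * t))
      (by exact hRc.comp (continuous_const.mul continuous_id))).abs
  have hI2 : Integrable (fun t : ℝ => ε * h ^ (ν + 1) * |t ^ (ν + 1) * K t|) :=
    hKint.const_mul _
  calc ‖∫ t, K t * R (h * t)‖ ≤ ∫ t, |K t * R (h * t)| := by
        have := norm_integral_le_integral_norm (μ := volume) (fun t => K t * R (h * t))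
        simpa only [Real.norm_eq_abs] using this
    _ ≤ ∫ t, ε * h ^ (ν + 1) * |t ^ (ν + 1) * K t| :=
        integral_mono hI1 hI2 hptwise
    _ = ε * h ^ (ν + 1) * C := by
        rw [integral_const_mul]
    _ = (ε * C) * h ^ (ν + 1) := by ring
    _ ≤ c * h ^ (ν + 1) :=
        mul_le_mul_of_nonneg_right hεC (by positivity)
    _ = c * ‖h ^ (ν + 1)‖ := by
        rw [Real.norm_eq_abs, abs_of_pos (by positivity)]
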